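/- Let k0>0, let 0<c≤π/2, and let y1∈ℝ satisfy 0 < y1 < 2k0·sin c. Then the equation sin(c·sin t)·sin t = y1/(2k0) has exactly four solutions t in the interval (0,2π); moreover the function t ↦ sin(c·sin t)·sin t is strictly increasing on (0,π/2) with supremum sin c. -/
import Mathlib


open Set

theorem stmt8 (k0 c y1 : ℝ) (hk0 : 0 < k0) (hc0 : 0 < c) (hc : c ≤ Real.pi / 2)
    (hy1 : 0 < y1) (hy1' : y1 < 2 * k0 * Real.sin c) :
    Set.ncard {t ∈ Ioo (0 : ℝ) (2 * Real.pi) |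
        Real.sin (c * Real.sin t) * Real.sin t = y1 / (2 * k0)} = 4 ∧
    StrictMonoOn (fun t => Real.sin (c * Real.sin t) * Real.sin t)
      (Ioo (0 : ℝ) (Real.pi / 2)) ∧
    sSup ((fun t => Real.sin (c * Real.sin t) * Real.sin t) ''
        Ioo (0 : ℝ) (Real.pi / 2)) = Real.sin c := by
  have hπ := Real.pi_pos
  set f : ℝ → ℝ := fun t => Real.sin (c * Real.sin t) * Real.sin t with hf
  have hsinc : 0 < Real.sin c := Real.sin_pos_of_pos_of_lt_pi hc0 (by linarith)
  -- strict monotonicity on the closed interval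
  have hmono : StrictMonoOn f (Icc 0 (Real.pi / 2)) := by
    intro x hx y hy hxy
    have hsx : Real.sin x < Real.sin y :=
      Real.strictMonoOn_sin ⟨by linarith [hx.1], hx.2⟩ ⟨by linarith [hy.1], hy.2⟩ hxy
    have hsx0 : 0 ≤ Real.sin x :=
      Real.sin_nonneg_of_nonneg_of_le_pi hx.1 (by linarith [hx.2])
    have hsy1 : Real.sin y ≤ 1 := Real.sin_le_one y
    have hcsx : Real.sin (c * Real.sin x) < Real.sin (c * Real.sin y) := by
      apply Real.strictMonoOn_sin
      · constructor <;> nlinarith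
      · constructor <;> nlinarith
      · nlinarith
    have h1 : 0 ≤ Real.sin (c * Real.sin x) :=
      Real.sin_nonneg_of_nonneg_of_le_pi (by positivity) (by nlinarith)
    have hsy0 : 0 < Real.sin y := by
      have : 0 < y := lt_of_le_of_lt hx.1 hxy
      exact Real.sin_pos_of_pos_of_lt_pi this (by linarith [hy.2])
    show Real.sin (c * Real.sin x) * Real.sin x < Real.sin (c * Real.sin y) * Real.sin y
    nlinarith
  have hcont : Continuous f :=
    (Real.continuous_sin.comp (continuous_const.mul Real.continuous_sin)).mul Real.continuous_sin
  have hfpi2 : f (Real.pi / 2) = Real.sin c := by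
    simp [hf]
  have hf0 : f 0 = 0 := by simp [hf]
  -- the image
  have himg : f '' Ioo (0 : ℝ) (Real.pi / 2) = Ioo 0 (Real.sin c) := by
    apply Subset.antisymm
    · rintro _ ⟨t, ht, rfl⟩
      constructor
      · have hst : 0 < Real.sin t := Real.sin_pos_of_pos_of_lt_pi ht.1 (by linarith [ht.2])
        have hst1 : Real.sin t ≤ 1 := Real.sin_le_one t
        have : 0 < Real.sin (c * Real.sin t) := by
          apply Real.sin_pos_of_pos_of_lt_pi (by positivity)
          nlinarith
        exact mul_pos this hst
      · have := hmono ⟨ht.1.le, ht.2.le⟩ ⟨by linarith, le_refl _⟩ ht.2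
        rwa [hfpi2] at this
    · have h := intermediate_value_Ioo (by linarith : (0:ℝ) ≤ Real.pi / 2) hcont.continuousOn
      rw [hf0, hfpi2] at h
      exact h
  refine ⟨?_, hmono.mono Ioo_subset_Icc_self, by rw [himg]; exact csSup_Ioo hsinc⟩
  -- counting solutions
  set v := y1 / (2 * k0) with hv
  have hv0 : 0 < v := by positivity
  have hv1 : v < Real.sin c := by
    rw [hv, div_lt_iff₀ (by positivity)]
    nlinarith
  obtain ⟨t0, ht0, hft0⟩ : v ∈ f '' Ioo (0 : ℝ) (Real.pi / 2) := by
    rw [himg]; exact ⟨hv0, hv1⟩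
  have huniq : ∀ t ∈ Ioo (0:ℝ) (Real.pi / 2), f t = v → t = t0 := by
    intro t ht h
    exact hmono.injOn (Ioo_subset_Icc_self ht) (Ioo_subset_Icc_self ht0)
      (h.trans hft0.symm)
  have hper : ∀ t, f (t + Real.pi) = f t := by
    intro t
    have h1 : Real.sin (t + Real.pi) = -Real.sin t := by
      simp [Real.sin_add]
    simp only [hf, h1, mul_neg, Real.sin_neg, neg_mul, neg_neg]
  have hsym : ∀ t, f (Real.pi - t) = f t := by
    intro t
    simp only [hf, Real.sin_pi_sub]
  have key : ∀ s ∈ Ioo (0:ℝ) Real.pi, f s = v → s = t0 ∨ s = Real.pi - t0 := by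
    intro s hs hfs
    rcases lt_trichotomy s (Real.pi / 2) with h | h | h
    · exact Or.inl (huniq s ⟨hs.1, h⟩ hfs)
    · exfalso
      rw [h, hfpi2] at hfs
      linarith
    · right
      have := huniq (Real.pi - s) ⟨by linarith [hs.2], by linarith⟩
        (by rw [hsym]; exact hfs)
      linarith
  have hS : {t ∈ Ioo (0 : ℝ) (2 * Real.pi) | f t = v}
      = {t0, Real.pi - t0, Real.pi + t0, 2 * Real.pi - t0} := by
    ext t
    simp only [mem_setOf_eq, mem_Ioo, mem_insert_iff, mem_singleton_iff]
    constructor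
    · rintro ⟨⟨ht1, ht2⟩, hft⟩
      rcases lt_trichotomy t Real.pi with h | h | h
      · rcases key t ⟨ht1, h⟩ hft with h' | h'
        · exact Or.inl h'
        · exact Or.inr (Or.inl h')
      · exfalso
        rw [h] at hft
        simp [hf] at hft
        linarith
      · have hs : t - Real.pi ∈ Ioo (0:ℝ) Real.pi := ⟨by linarith, by linarith⟩
        have hfs : f (t - Real.pi) = v := by
          have := hper (t - Real.pi)
          rw [sub_add_cancel] at this
          rw [← this]; exact hft
        rcases key _ hs hfs with h' | h'
        · exact Or.inr (Or.inr (Or.inl (by linarith)))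
        · exact Or.inr (Or.inr (Or.inr (by linarith)))
    · have h1 := ht0.1
      have h2 := ht0.2
      rintro (rfl | rfl | rfl | rfl)
      · exact ⟨⟨h1, by linarith⟩, hft0⟩
      · exact ⟨⟨by linarith, by linarith⟩, by rw [hsym]; exact hft0⟩
      · refine ⟨⟨by linarith, by linarith⟩, ?_⟩
        rw [add_comm, hper]; exact hft0
      · refine ⟨⟨by linarith, by linarith⟩, ?_⟩
        have he : 2 * Real.pi - t0 = (Real.pi - t0) + Real.pi := by ring
        rw [he, hper, hsym]; exact hft0
  rw [hS]
  have h1 := ht0.1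
  have h2 := ht0.2
  rw [Set.ncard_insert_of_notMem
      (by intro h; simp only [mem_insert_iff, mem_singleton_iff] at h
          rcases h with h | h | h <;> linarith) (Set.toFinite _),
    Set.ncard_insert_of_notMem
      (by intro h; simp only [mem_insert_iff, mem_singleton_iff] at h
          rcases h with h | h <;> linarith) (Set.toFinite _),
    Set.ncard_insert_of_notMem
      (by intro h; simp only [mem_singleton_iff] at h; linarith) (Set.toFinite _),
    Set.ncard_singleton]
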